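/- (Totality and safety of gen_Δ on safe atoms.) For every division Δ and every atom A that is safe wrt Δ: gen_Δ(A) is defined; moreover gen_Δ(A) is again safe wrt Δ, and A is an instance of gen_Δ(A). -/

import Mathlib

/-- First-order terms over countably infinite sets of variables (ℕ)
and function symbols (ℕ). -/
inductive Term : Type where
  | var : ℕ → Term
  | app : ℕ → List Term → Term

namespace Term

/-- Applying a substitution (a mapping from variables to terms) homomorphically. -/
def subst (θ : ℕ → Term) : Term → Term
  | var v => θ v
  | app f ts => app f (ts.attach.map (fun x => x.1.subst θ))
decreasing_by
  have := List.sizeOf_lt_of_mem x.2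
  simp only [Term.app.sizeOf_spec]
  omega

/-- A term is ground if it contains no variables. -/
inductive Ground : Term → Prop where
  | app : ∀ f ts, (∀ t ∈ ts, Ground t) → Ground (app f ts)

/-- The variable `v` occurs in the term. -/
inductive Occurs (v : ℕ) : Term → Prop where
  | var : Occurs v (var v)
  | app : ∀ f ts t, t ∈ ts → Occurs v t → Occurs v (app f ts)

/-- `s` is an instance of `t` if `s = tθ` for some substitution `θ`. -/
def IsInstanceOf (s t : Term) : Prop := ∃ θ : ℕ → Term, t.subst θ = s

/-- Two terms are variants if each is an instance of the other. -/
def Variant (s t : Term) : Prop := s.IsInstanceOf t ∧ t.IsInstanceOf s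

end Term

/-- Types: type variables, the distinguished 0-ary constructors
`static`, `dynamic`, `nonvar`, and other constructors applied to types. -/
inductive Ty : Type where
  | var : ℕ → Ty
  | static : Ty
  | dynamic : Ty
  | nonvar : Ty
  | con : ℕ → List Ty → Ty

namespace Ty

/-- Applying a type substitution. -/
def subst (σ : ℕ → Ty) : Ty → Ty
  | var v => σ v
  | static => static
  | dynamic => dynamic
  | nonvar => nonvar
  | con c args => con c (args.attach.map (fun x => x.1.subst σ))
decreasing_by
  have := List.sizeOf_lt_of_mem x.2
  simp only [Ty.con.sizeOf_spec]
  omega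

/-- A type is ground if it contains no type variables. -/
inductive Ground : Ty → Prop where
  | static : Ground static
  | dynamic : Ground dynamic
  | nonvar : Ground nonvar
  | con : ∀ c args, (∀ τ ∈ args, Ground τ) → Ground (con c args)

/-- All type variables of the type are below `n`. -/
inductive VarsBelow (n : ℕ) : Ty → Prop where
  | var : ∀ v, v < n → VarsBelow n (var v)
  | static : VarsBelow n static
  | dynamic : VarsBelow n dynamic
  | nonvar : VarsBelow n nonvar
  | con : ∀ c args, (∀ τ ∈ args, VarsBelow n τ) → VarsBelow n (con c args)

end Ty

/-- A type definition `c(V₁,…,Vₙ) → f₁(T₁¹,…) ; … ; f_k(T_k¹,…)` for an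
`n`-ary type constructor: the variables are represented by `0,…,arity-1`,
the alternatives are pairs of a function symbol and the list of argument types;
the function symbols are distinct and the argument types only use
variables among `0,…,arity-1`. -/
structure TypeDef where
  arity : ℕ
  alts : List (ℕ × List Ty)
  alts_nonempty : alts ≠ []
  alts_nodup : (alts.map Prod.fst).Nodup
  vars_bound : ∀ p ∈ alts, ∀ τ ∈ p.2, Ty.VarsBelow arity τ

/-- A type system: exactly one type definition for every type constructor
other than `static`, `dynamic` and `nonvar`. -/
structure TypeSystem where
  defs : ℕ → TypeDef

mutual
/-- The type judgement `t : τ` relative to the type system `Γ`. -/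
inductive HasType (Γ : TypeSystem) : Term → Ty → Prop where
  | dyn (t : Term) : HasType Γ t .dynamic
  | stat (t : Term) : t.Ground → HasType Γ t .static
  | nv (f : ℕ) (ts : List Term) : HasType Γ (.app f ts) .nonvar
  | con (c : ℕ) (σ : ℕ → Ty) (f : ℕ) (Ts : List Ty) (ts : List Term)
      (hσ : ∀ v, (σ v).Ground)
      (hmem : (f, Ts) ∈ (Γ.defs c).alts)
      (hargs : HasTypeArgs Γ ts (Ts.map (Ty.subst σ))) :
      HasType Γ (.app f ts) (.con c ((List.range (Γ.defs c).arity).map σ))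

/-- `HasTypeArgs Γ ts τs` : the terms `ts` pointwise have the types `τs`. -/
inductive HasTypeArgs (Γ : TypeSystem) : List Term → List Ty → Prop where
  | nil : HasTypeArgs Γ [] []
  | cons {t τ ts τs} : HasType Γ t τ → HasTypeArgs Γ ts τs →
      HasTypeArgs Γ (t :: ts) (τ :: τs)
end

/-- Atoms `p(t₁,…,tₙ)` over a countably infinite set of predicate symbols (ℕ). -/
structure Atom where
  pred : ℕ
  args : List Term

namespace Atom

/-- Substitutions apply to atoms argumentwise. -/
def subst (θ : ℕ → Term) (A : Atom) : Atom := ⟨A.pred, A.args.map (Term.subst θ)⟩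

/-- `B` is an instance of `A`. -/
def IsInstanceOf (B A : Atom) : Prop := ∃ θ : ℕ → Term, A.subst θ = B

/-- Two atoms are variants if each is an instance of the other. -/
def Variant (A B : Atom) : Prop := A.IsInstanceOf B ∧ B.IsInstanceOf A

end Atom

/-- A division: a set of expressions `p(τ₁,…,τₙ)` (represented as pairs of a
predicate symbol and a list of types), with all types ground and at most one
division per predicate. -/
def IsDivision (Δ : Set (ℕ × List Ty)) : Prop :=
  (∀ d ∈ Δ, ∀ τ ∈ d.2, τ.Ground) ∧
  (∀ d ∈ Δ, ∀ d' ∈ Δ, d.1 = d'.1 → d = d')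

/-- An atom `p(t₁,…,tₙ)` is safe wrt `Δ` iff there is `p(τ₁,…,τₙ) ∈ Δ`
with `tᵢ : τᵢ` for all `i`. -/
def SafeAtom (Γ : TypeSystem) (Δ : Set (ℕ × List Ty)) (A : Atom) : Prop :=
  ∃ τs : List Ty, (A.pred, τs) ∈ Δ ∧ HasTypeArgs Γ A.args τs

mutual
/-- `Gen Γ τ t s L`: `s` is a result of the partial generalisation mapping
`gen_τ(t)`, where `L` records (in order) the fresh variables chosen. -/
inductive Gen (Γ : TypeSystem) : Ty → Term → Term → List ℕ → Prop where
  | static (t : Term) : Gen Γ .static t t []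
  | dynamic (t : Term) (v : ℕ) : Gen Γ .dynamic t (.var v) [v]
  | nonvar (f : ℕ) (ts : List Term) (vs : List ℕ) (h : vs.length = ts.length) :
      Gen Γ .nonvar (.app f ts) (.app f (vs.map Term.var)) vs
  | con (c : ℕ) (σ : ℕ → Ty) (f : ℕ) (Ts : List Ty) (ts ss : List Term) (L : List ℕ)
      (hσ : ∀ v, (σ v).Ground)
      (hmem : (f, Ts) ∈ (Γ.defs c).alts)
      (hargs : GenArgs Γ (Ts.map (Ty.subst σ)) ts ss L) :
      Gen Γ (.con c ((List.range (Γ.defs c).arity).map σ)) (.app f ts) (.app f ss) L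

/-- Pointwise generalisation of a list of terms, collecting the fresh variables. -/
inductive GenArgs (Γ : TypeSystem) : List Ty → List Term → List Term → List ℕ → Prop where
  | nil : GenArgs Γ [] [] [] []
  | cons {τ t s L τs ts ss Ls} : Gen Γ τ t s L → GenArgs Γ τs ts ss Ls →
      GenArgs Γ (τ :: τs) (t :: ts) (s :: ss) (L ++ Ls)
end

/-- `GenAtom Γ Δ A B L`: `B` is a result of `gen_Δ(A)` with fresh variables `L`. -/
def GenAtom (Γ : TypeSystem) (Δ : Set (ℕ × List Ty)) (A B : Atom) (L : List ℕ) : Prop :=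
  B.pred = A.pred ∧
  ∃ τs : List Ty, (A.pred, τs) ∈ Δ ∧ HasTypeArgs Γ A.args τs ∧
    GenArgs Γ τs A.args B.args L

namespace Term

theorem subst_app' (θ : ℕ → Term) (f : ℕ) (ts : List Term) :
    Term.subst θ (.app f ts) = .app f (ts.map (Term.subst θ)) := by
  rw [Term.subst]
  congr 1
  exact List.attach_map_val

theorem subst_var' (θ : ℕ → Term) (v : ℕ) : Term.subst θ (.var v) = θ v := by
  rw [Term.subst]

theorem subst_id : ∀ t : Term, t.subst Term.var = t
  | .var v => subst_var' Term.var v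
  | .app f ts => by
    rw [subst_app']
    congr 1
    have h : ∀ t' ∈ ts, t'.subst Term.var = t' := fun t' ht => subst_id t'
    calc ts.map (Term.subst Term.var) = ts.map id := List.map_congr_left h
    _ = ts := List.map_id ts
decreasing_by
  have := List.sizeOf_lt_of_mem ht
  simp only [Term.app.sizeOf_spec]
  omega

theorem subst_congr : ∀ (t : Term) (θ₁ θ₂ : ℕ → Term),
    (∀ v, Term.Occurs v t → θ₁ v = θ₂ v) → t.subst θ₁ = t.subst θ₂
  | .var v, θ₁, θ₂, h => by
    rw [subst_var', subst_var']; exact h v .var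
  | .app f ts, θ₁, θ₂, h => by
    rw [subst_app', subst_app']
    congr 1
    refine List.map_congr_left (fun t' ht => ?_)
    exact subst_congr t' θ₁ θ₂ (fun v hv => h v (.app f ts t' ht hv))
decreasing_by
  have := List.sizeOf_lt_of_mem ht
  simp only [Term.app.sizeOf_spec]
  omega

/-- A strict bound on the variables occurring in a term. -/
def maxVar : Term → ℕ
  | .var v => v + 1
  | .app _ ts => (ts.attach.map (fun x => maxVar x.1)).foldr max 0
decreasing_by
  have := List.sizeOf_lt_of_mem x.2
  simp only [Term.app.sizeOf_spec]
  omega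

theorem maxVar_app (f : ℕ) (ts : List Term) :
    maxVar (.app f ts) = (ts.map maxVar).foldr max 0 := by
  rw [maxVar]
  congr 1
  exact List.attach_map_val

theorem le_foldr_max : ∀ (l : List ℕ) (a : ℕ), a ∈ l → a ≤ l.foldr max 0
  | b :: l, a, h => by
    rcases List.mem_cons.1 h with h | h
    · subst h; exact le_max_left _ _
    · exact le_trans (le_foldr_max l a h) (le_max_right _ _)

theorem occurs_lt_maxVar {v : ℕ} {t : Term} (h : Term.Occurs v t) : v < maxVar t := by
  induction h with
  | var => simp [maxVar]
  | app f ts t' ht' _ ih =>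
    rw [maxVar_app]
    exact lt_of_lt_of_le ih (le_foldr_max _ (maxVar t') (List.mem_map_of_mem ht'))

end Term

/-- The pointwise (list) version of totality of `gen`, assuming the
single-term statement for each member of the list. -/
theorem gen_args_aux (Γ : TypeSystem) :
    ∀ (ts : List Term) (τs : List Ty), HasTypeArgs Γ ts τs →
    (∀ t ∈ ts, ∀ τ, HasType Γ t τ → ∀ n : ℕ, (∀ v, Term.Occurs v t → v < n) →
      ∃ (s : Term) (k : ℕ) (θ : ℕ → Term),
        Gen Γ τ t s (List.range' n k) ∧ HasType Γ s τ ∧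
        (∀ v, Term.Occurs v s → Term.Occurs v t ∨ (n ≤ v ∧ v < n + k)) ∧
        s.subst θ = t ∧ (∀ v, v < n ∨ n + k ≤ v → θ v = Term.var v)) →
    ∀ n : ℕ, (∀ v, ∀ t ∈ ts, Term.Occurs v t → v < n) →
    ∃ (ss : List Term) (k : ℕ) (θ : ℕ → Term),
      GenArgs Γ τs ts ss (List.range' n k) ∧ HasTypeArgs Γ ss τs ∧
      (∀ v, ∀ s ∈ ss, Term.Occurs v s → (∃ t ∈ ts, Term.Occurs v t) ∨ (n ≤ v ∧ v < n + k)) ∧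
      ss.map (Term.subst θ) = ts ∧ (∀ v, v < n ∨ n + k ≤ v → θ v = Term.var v) := by
  intro ts
  induction ts with
  | nil =>
    intro τs h _ n _
    cases h
    exact ⟨[], 0, Term.var, by simpa using GenArgs.nil, .nil, by simp, by simp, fun _ _ => rfl⟩
  | cons t ts ih =>
    intro τs' h ihsingle n hvars
    cases h with
    | @cons _ τ _ τs ht hts =>
    obtain ⟨s, k₁, θ₁, hgen₁, hty₁, hocc₁, hsub₁, hout₁⟩ :=
      ihsingle t (List.mem_cons_self) τ ht n (fun v hv => hvars v t (List.mem_cons_self) hv)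
    obtain ⟨ss, k₂, θ₂, hgen₂, hty₂, hocc₂, hsub₂, hout₂⟩ :=
      ih τs hts (fun t' ht' => ihsingle t' (List.mem_cons_of_mem t ht')) (n + k₁)
        (fun v t' ht' hv => lt_of_lt_of_le (hvars v t' (List.mem_cons_of_mem t ht') hv) (Nat.le_add_right n k₁))
    refine ⟨s :: ss, k₁ + k₂, fun v => if v < n + k₁ then θ₁ v else θ₂ v, ?_, .cons hty₁ hty₂, ?_, ?_, ?_⟩
    · have hr : List.range' n (k₁ + k₂) = List.range' n k₁ ++ List.range' (n + k₁) k₂ := by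
        rw [Nat.add_comm k₁ k₂]
        rw [Nat.add_comm k₂ k₁]; exact List.range'_append_1.symm
      rw [hr]
      exact GenArgs.cons hgen₁ hgen₂
    · intro v s' hs' hv
      rcases List.mem_cons.1 hs' with h | h
      · subst h
        rcases hocc₁ v hv with h | h
        · exact Or.inl ⟨t, List.mem_cons_self, h⟩
        · exact Or.inr ⟨h.1, by omega⟩
      · rcases hocc₂ v s' h hv with ⟨t', ht', hvt'⟩ | h
        · exact Or.inl ⟨t', List.mem_cons_of_mem t ht', hvt'⟩
        · exact Or.inr ⟨by omega, by omega⟩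
    · rw [List.map_cons]
      congr 1
      · rw [← hsub₁]
        refine Term.subst_congr s _ _ (fun v hv => ?_)
        rcases hocc₁ v hv with h | h
        · have : v < n := hvars v t (List.mem_cons_self) h
          simp [if_pos (by omega : v < n + k₁)]
        · simp [if_pos (by omega : v < n + k₁)]
      · rw [← hsub₂]
        refine List.map_congr_left (fun s' hs' => ?_)
        refine Term.subst_congr s' _ _ (fun v hv => ?_)
        rcases hocc₂ v s' hs' hv with ⟨t', ht', hvt'⟩ | h
        · have hvn : v < n := hvars v t' (List.mem_cons_of_mem t ht') hvt'
          rw [if_pos (by omega : v < n + k₁), hout₁ v (Or.inl hvn), hout₂ v (Or.inl (by omega))]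
        · rw [if_neg (by omega : ¬ v < n + k₁)]
    · intro v hv
      show (if v < n + k₁ then θ₁ v else θ₂ v) = Term.var v
      by_cases hc : v < n + k₁
      · rw [if_pos hc, hout₁ v (by omega)]
      · rw [if_neg hc, hout₂ v (by omega)]

/-- Totality of `gen` on a single well-typed term. -/
theorem gen_total (Γ : TypeSystem) : ∀ (t : Term) (τ : Ty), HasType Γ t τ →
    ∀ n : ℕ, (∀ v, Term.Occurs v t → v < n) →
    ∃ (s : Term) (k : ℕ) (θ : ℕ → Term),
      Gen Γ τ t s (List.range' n k) ∧ HasType Γ s τ ∧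
      (∀ v, Term.Occurs v s → Term.Occurs v t ∨ (n ≤ v ∧ v < n + k)) ∧
      s.subst θ = t ∧ (∀ v, v < n ∨ n + k ≤ v → θ v = Term.var v) := by
  intro t τ h n hvars
  cases h with
  | dyn t =>
    refine ⟨.var n, 1, fun v => if v = n then t else .var v, ?_, .dyn _, ?_, ?_, ?_⟩
    · simpa using Gen.dynamic t n
    · intro v hv; cases hv; exact Or.inr ⟨le_refl n, by omega⟩
    · rw [Term.subst_var']; simp
    · intro v hv
      show (if v = n then t else Term.var v) = Term.var v
      rw [if_neg (by omega)]
  | stat t hg =>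
    refine ⟨t, 0, Term.var, by simpa using Gen.static t, .stat t hg, ?_, Term.subst_id t, fun _ _ => rfl⟩
    intro v hv; exact Or.inl hv
  | nv f ts =>
    refine ⟨.app f ((List.range' n ts.length).map Term.var), ts.length,
      fun v => if v < n then .var v else if v < n + ts.length then ts.getD (v - n) (.var 0) else .var v,
      ?_, .nv _ _, ?_, ?_, ?_⟩
    · exact Gen.nonvar f ts _ (by simp)
    · intro v hv
      cases hv with
      | app _ _ t' ht' hvt' =>
        obtain ⟨w, hw, rfl⟩ := List.mem_map.1 ht'
        cases hvt'
        exact Or.inr (List.mem_range'_1.1 hw)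
    · rw [Term.subst_app', List.map_map]
      congr 1
      refine List.ext_getElem (by simp) (fun i h₁ h₂ => ?_)
      simp only [List.getElem_map, List.getElem_range', Function.comp_apply, Term.subst_var']
      have hi : i < ts.length := by simpa using h₂
      rw [if_neg (by omega), if_pos (by omega), show n + 1 * i - n = i from by omega]
      exact List.getD_eq_getElem ts _ hi
    · intro v hv
      show (if v < n then Term.var v else if v < n + ts.length then ts.getD (v - n) (Term.var 0) else Term.var v) = Term.var v
      rcases hv with hv | hv
      · rw [if_pos hv]
      · rw [if_neg (by omega), if_neg (by omega)]
  | con c σ f Ts ts hσ hmem hargs =>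
    have hsingle : ∀ t' ∈ ts, ∀ τ', HasType Γ t' τ' → ∀ m : ℕ,
        (∀ v, Term.Occurs v t' → v < m) →
        ∃ (s : Term) (k : ℕ) (θ : ℕ → Term),
          Gen Γ τ' t' s (List.range' m k) ∧ HasType Γ s τ' ∧
          (∀ v, Term.Occurs v s → Term.Occurs v t' ∨ (m ≤ v ∧ v < m + k)) ∧
          s.subst θ = t' ∧ (∀ v, v < m ∨ m + k ≤ v → θ v = Term.var v) :=
      fun t' ht' τ' h' m hm => gen_total Γ t' τ' h' m hm
    obtain ⟨ss, k, θ, hgen, hty, hocc, hsub, hout⟩ :=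
      gen_args_aux Γ ts (Ts.map (Ty.subst σ)) hargs hsingle n
        (fun v t' ht' hv => hvars v (.app f ts t' ht' hv))
    refine ⟨.app f ss, k, θ, Gen.con c σ f Ts ts ss _ hσ hmem hgen,
      .con c σ f Ts ss hσ hmem hty, ?_, ?_, hout⟩
    · intro v hv
      cases hv with
      | app _ _ s' hs' hvs' =>
        rcases hocc v s' hs' hvs' with ⟨t', ht', hvt'⟩ | h
        · exact Or.inl (.app f ts t' ht' hvt')
        · exact Or.inr h
    · rw [Term.subst_app', hsub]
termination_by t => sizeOf t
decreasing_by
  have := List.sizeOf_lt_of_mem ht'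
  subst_vars
  simp only [Term.app.sizeOf_spec] at *
  omega

/-- **Totality and safety of `gen_Δ` on safe atoms.** For every division `Δ` and
every atom `A` safe wrt `Δ`: `gen_Δ(A)` is defined (with distinct fresh variables
not occurring in `A`); moreover `gen_Δ(A)` is again safe wrt `Δ`, and `A` is an
instance of `gen_Δ(A)`. -/
theorem genAtom_total_safe (Γ : TypeSystem) (Δ : Set (ℕ × List Ty))
    (hΔ : IsDivision Δ) (A : Atom) (h : SafeAtom Γ Δ A) :
    ∃ (B : Atom) (L : List ℕ), GenAtom Γ Δ A B L ∧ L.Nodup ∧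
      (∀ v ∈ L, ∀ t ∈ A.args, ¬ Term.Occurs v t) ∧
      SafeAtom Γ Δ B ∧ A.IsInstanceOf B := by
  obtain ⟨τs, hmem, hargs⟩ := h
  set n : ℕ := (A.args.map Term.maxVar).foldr max 0 with hn
  have hvars : ∀ v, ∀ t ∈ A.args, Term.Occurs v t → v < n := by
    intro v t ht hv
    exact lt_of_lt_of_le (Term.occurs_lt_maxVar hv)
      (Term.le_foldr_max _ (Term.maxVar t) (List.mem_map_of_mem ht))
  obtain ⟨ss, k, θ, hgen, hty, hocc, hsub, hout⟩ :=
    gen_args_aux Γ A.args τs hargs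
      (fun t _ τ h' m hm => gen_total Γ t τ h' m hm) n hvars
  refine ⟨⟨A.pred, ss⟩, List.range' n k, ⟨rfl, τs, hmem, hargs, hgen⟩,
    by exact List.nodup_range', ?_, ⟨τs, hmem, hty⟩, ⟨θ, ?_⟩⟩
  · intro v hv t ht hocc'
    have h₁ : n ≤ v := (List.mem_range'_1.1 hv).1
    have h₂ : v < n := hvars v t ht hocc'
    omega
  · show Atom.subst θ ⟨A.pred, ss⟩ = A
    show (⟨A.pred, ss.map (Term.subst θ)⟩ : Atom) = A
    rw [hsub]
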